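/- Let A and B be Hermitian N × N complex matrices, with eigenvalues listed with multiplicity, and for a Hermitian matrix M let F_M(ξ) = (1/N)·#{ j : λ_j(M) ≤ ξ } denote its empirical spectral distribution function. Then for every ξ ∈ ℝ, |F_A(ξ) − F_B(ξ)| ≤ rank(A − B)/N. -/

import Mathlib

open Finset

open Matrix Module
open scoped InnerProductSpace

noncomputable section

variable {N : ℕ}

lemma coeff_zero (b : OrthonormalBasis (Fin N) ℂ (EuclideanSpace ℂ (Fin N)))
    {S : Finset (Fin N)} {x : EuclideanSpace ℂ (Fin N)}
    (hx : x ∈ Submodule.span ℂ (b '' ↑S)) {i : Fin N} (hi : i ∉ S) :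
    (inner ℂ (b i) x : ℂ) = 0 := by
  induction hx using Submodule.span_induction with
  | mem y hy =>
      obtain ⟨j, hj, rfl⟩ := hy
      exact b.orthonormal.2 (fun h => hi (h ▸ hj))
  | zero => simp
  | add y z _ _ hy hz => rw [inner_add_right, hy, hz, add_zero]
  | smul c y _ hy => rw [inner_smul_right, hy, mul_zero]

lemma toEuclideanLin_eigen {A : Matrix (Fin N) (Fin N) ℂ} (hA : A.IsHermitian) (j : Fin N) :
    Matrix.toEuclideanLin A (hA.eigenvectorBasis j) =
      (hA.eigenvalues j : ℂ) • hA.eigenvectorBasis j := by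
  apply (WithLp.equiv 2 (Fin N → ℂ)).injective
  change WithLp.ofLp (Matrix.toEuclideanLin A (hA.eigenvectorBasis j)) =
    WithLp.ofLp ((hA.eigenvalues j : ℂ) • hA.eigenvectorBasis j)
  rw [Matrix.ofLp_toEuclideanLin_apply, WithLp.ofLp_smul]
  exact hA.mulVec_eigenvectorBasis j

lemma quad_re {A : Matrix (Fin N) (Fin N) ℂ} (hA : A.IsHermitian) (x : EuclideanSpace ℂ (Fin N)) :
    (inner ℂ x (Matrix.toEuclideanLin A x) : ℂ).re =
      ∑ j, hA.eigenvalues j * ‖(inner ℂ (hA.eigenvectorBasis j) x : ℂ)‖ ^ 2 := by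
  have hsym := (Matrix.isHermitian_iff_isSymmetric.mp hA)
  have key : (inner ℂ x (Matrix.toEuclideanLin A x) : ℂ) =
      ∑ j, ((hA.eigenvalues j * ‖(inner ℂ (hA.eigenvectorBasis j) x : ℂ)‖ ^ 2 : ℝ) : ℂ) := by
    rw [← hA.eigenvectorBasis.sum_inner_mul_inner x (Matrix.toEuclideanLin A x)]
    refine Finset.sum_congr rfl fun i _ => ?_
    rw [← hsym (hA.eigenvectorBasis i) x, toEuclideanLin_eigen hA i, inner_smul_left,
      Complex.conj_ofReal, ← inner_conj_symm x (hA.eigenvectorBasis i)]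
    calc (starRingEnd ℂ) (inner ℂ (hA.eigenvectorBasis i) x) *
          ((hA.eigenvalues i : ℂ) * inner ℂ (hA.eigenvectorBasis i) x)
        = (hA.eigenvalues i : ℂ) *
          ((starRingEnd ℂ) (inner ℂ (hA.eigenvectorBasis i) x) * inner ℂ (hA.eigenvectorBasis i) x) := by
          ring
      _ = _ := by rw [RCLike.conj_mul]; simp [Complex.ofReal_pow]
  rw [key, ← Complex.ofReal_sum, Complex.ofReal_re]

lemma norm_sq_sum (b : OrthonormalBasis (Fin N) ℂ (EuclideanSpace ℂ (Fin N)))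
    (x : EuclideanSpace ℂ (Fin N)) :
    ‖x‖ ^ 2 = ∑ j, ‖(inner ℂ (b j) x : ℂ)‖ ^ 2 := by
  have h := b.sum_inner_mul_inner x x
  have h2 : (inner ℂ x x : ℂ) = ((‖x‖ ^ 2 : ℝ) : ℂ) := by
    rw [inner_self_eq_norm_sq_to_K]; norm_cast
  rw [h2] at h
  have h3 : ∀ i : Fin N, (inner ℂ x (b i) : ℂ) * inner ℂ (b i) x
      = ((‖(inner ℂ (b i) x : ℂ)‖ ^ 2 : ℝ) : ℂ) := by
    intro i
    rw [← inner_conj_symm x (b i), RCLike.conj_mul]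
    simp [Complex.ofReal_pow]
  simp_rw [h3, ← Complex.ofReal_sum] at h
  exact_mod_cast h.symm

lemma finrank_span_onb (b : OrthonormalBasis (Fin N) ℂ (EuclideanSpace ℂ (Fin N)))
    (S : Finset (Fin N)) :
    finrank ℂ (Submodule.span ℂ (b '' ↑S)) = S.card := by
  have hli : LinearIndependent ℂ (fun j : {j // j ∈ S} => b j) :=
    b.orthonormal.linearIndependent.comp Subtype.val Subtype.val_injective
  have himg : Set.range (fun j : {j // j ∈ S} => b j) = b '' ↑S := by
    ext y; simp
  rw [← himg, finrank_span_eq_card hli, Fintype.card_coe]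

lemma quad_upper {A : Matrix (Fin N) (Fin N) ℂ} (hA : A.IsHermitian) (ξ : ℝ)
    {x : EuclideanSpace ℂ (Fin N)}
    (hx : x ∈ Submodule.span ℂ
      (hA.eigenvectorBasis '' ↑(univ.filter fun j => hA.eigenvalues j ≤ ξ))) :
    (inner ℂ x (Matrix.toEuclideanLin A x) : ℂ).re ≤ ξ * ‖x‖ ^ 2 := by
  rw [quad_re hA x, norm_sq_sum hA.eigenvectorBasis x, Finset.mul_sum]
  refine Finset.sum_le_sum fun i _ => ?_
  by_cases hi : i ∈ univ.filter fun j => hA.eigenvalues j ≤ ξ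
  · have := (Finset.mem_filter.mp hi).2
    nlinarith [sq_nonneg ‖(inner ℂ (hA.eigenvectorBasis i) x : ℂ)‖]
  · rw [coeff_zero hA.eigenvectorBasis hx hi]
    simp

lemma quad_lower {B : Matrix (Fin N) (Fin N) ℂ} (hB : B.IsHermitian) (ξ : ℝ)
    {x : EuclideanSpace ℂ (Fin N)} (hx0 : x ≠ 0)
    (hx : x ∈ Submodule.span ℂ
      (hB.eigenvectorBasis '' ↑(univ.filter fun j => ¬ hB.eigenvalues j ≤ ξ))) :
    ξ * ‖x‖ ^ 2 < (inner ℂ x (Matrix.toEuclideanLin B x) : ℂ).re := by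
  rw [quad_re hB x, norm_sq_sum hB.eigenvectorBasis x, Finset.mul_sum]
  have hex : ∃ i : Fin N, (inner ℂ (hB.eigenvectorBasis i) x : ℂ) ≠ 0 := by
    by_contra h
    push_neg at h
    apply hx0
    rw [← hB.eigenvectorBasis.sum_repr' x]
    simp [h]
  obtain ⟨i0, hi0⟩ := hex
  have hi0S : i0 ∈ univ.filter fun j => ¬ hB.eigenvalues j ≤ ξ := by
    by_contra h
    exact hi0 (coeff_zero hB.eigenvectorBasis hx h)
  refine Finset.sum_lt_sum (fun i _ => ?_) ⟨i0, Finset.mem_univ i0, ?_⟩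
  · by_cases hi : i ∈ univ.filter fun j => ¬ hB.eigenvalues j ≤ ξ
    · have := not_le.mp (Finset.mem_filter.mp hi).2
      nlinarith [sq_nonneg ‖(inner ℂ (hB.eigenvectorBasis i) x : ℂ)‖]
    · rw [coeff_zero hB.eigenvectorBasis hx hi]
      simp
  · have hlt := not_le.mp (Finset.mem_filter.mp hi0S).2
    have hpos : (0:ℝ) < ‖(inner ℂ (hB.eigenvectorBasis i0) x : ℂ)‖ ^ 2 := by
      exact pow_pos (norm_pos_iff.mpr hi0) 2
    nlinarith

lemma finrank_ker_toEuclideanLin (M : Matrix (Fin N) (Fin N) ℂ) :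
    M.rank + finrank ℂ (LinearMap.ker (Matrix.toEuclideanLin M)) = N := by
  have hrange : LinearMap.range (Matrix.toEuclideanLin M) =
      (LinearMap.range M.mulVecLin).map
        (WithLp.linearEquiv 2 ℂ (Fin N → ℂ)).symm.toLinearMap := by
    ext y
    simp only [LinearMap.mem_range, Submodule.mem_map, LinearEquiv.coe_coe]
    constructor
    · rintro ⟨x, rfl⟩
      exact ⟨M.mulVecLin (WithLp.equiv 2 _ x), ⟨_, rfl⟩, rfl⟩
    · rintro ⟨z, ⟨w, rfl⟩, rfl⟩
      exact ⟨(WithLp.equiv 2 _).symm w, rfl⟩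
  have h1 : finrank ℂ (LinearMap.range (Matrix.toEuclideanLin M)) = M.rank := by
    rw [hrange, LinearEquiv.finrank_map_eq]
    rfl
  have h2 := LinearMap.finrank_range_add_finrank_ker (Matrix.toEuclideanLin M)
  rw [h1] at h2
  simpa using h2

lemma rank_sub_symm (A B : Matrix (Fin N) (Fin N) ℂ) : (B - A).rank = (A - B).rank := by
  have h : (B - A).mulVecLin = -((A - B).mulVecLin) := by
    ext x i
    simp [Matrix.mulVecLin_apply, ← Matrix.neg_mulVec, neg_sub]
  rw [Matrix.rank, Matrix.rank, h, LinearMap.range_neg]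

lemma card_filter_le (A B : Matrix (Fin N) (Fin N) ℂ)
    (hA : A.IsHermitian) (hB : B.IsHermitian) (ξ : ℝ) :
    (univ.filter fun j => hA.eigenvalues j ≤ ξ).card ≤
      (univ.filter fun j => hB.eigenvalues j ≤ ξ).card + (A - B).rank := by
  by_contra hcon
  push_neg at hcon
  set SA := univ.filter fun j => hA.eigenvalues j ≤ ξ with hSA
  set SBc := univ.filter fun j => ¬ hB.eigenvalues j ≤ ξ with hSBc
  set V := Submodule.span ℂ (hA.eigenvectorBasis '' ↑SA) with hV
  set W := Submodule.span ℂ (hB.eigenvectorBasis '' ↑SBc) with hW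
  set K := LinearMap.ker ((A - B).toEuclideanLin) with hK
  have hVd : finrank ℂ V = SA.card := finrank_span_onb _ _
  have hWd : finrank ℂ W = SBc.card := finrank_span_onb _ _
  have hKd := finrank_ker_toEuclideanLin (A - B)
  rw [← hK] at hKd
  have hSBcard : (univ.filter fun j => hB.eigenvalues j ≤ ξ).card + SBc.card = N := by
    rw [hSBc, Finset.card_filter_add_card_filter_not, Finset.card_univ,
      Fintype.card_fin]
  have htop : ∀ (U : Submodule ℂ (EuclideanSpace ℂ (Fin N))), finrank ℂ U ≤ N := by
    intro U
    simpa using U.finrank_le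
  have e2 := Submodule.finrank_sup_add_finrank_inf_eq W K
  have e1 := Submodule.finrank_sup_add_finrank_inf_eq V (W ⊓ K)
  have hpos : 0 < finrank ℂ ↥(V ⊓ (W ⊓ K)) := by
    have b1 := htop (V ⊔ (W ⊓ K))
    have b2 := htop (W ⊔ K)
    omega
  have hne : V ⊓ (W ⊓ K) ≠ ⊥ := by
    intro hbot
    rw [hbot] at hpos
    simp at hpos
  obtain ⟨x, hxmem, hx0⟩ := Submodule.exists_mem_ne_zero_of_ne_bot hne
  obtain ⟨hxV, hxWK⟩ := Submodule.mem_inf.mp hxmem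
  obtain ⟨hxW, hxK⟩ := Submodule.mem_inf.mp hxWK
  have hAB : Matrix.toEuclideanLin A x = Matrix.toEuclideanLin B x := by
    have h0 : Matrix.toEuclideanLin (A - B) x = 0 := hxK
    rw [map_sub, LinearMap.sub_apply, sub_eq_zero] at h0
    exact h0
  have h1 := quad_upper hA ξ hxV
  have h2 := quad_lower hB ξ hx0 hxW
  rw [← hAB] at h2
  linarith

/-- rank inequality for empirical spectral distribution functions of
Hermitian matrices: `|F_A(ξ) - F_B(ξ)| ≤ rank(A - B)/N`. -/
theorem esd_rank_inequality
    (N : ℕ) (hN : 0 < N) (A B : Matrix (Fin N) (Fin N) ℂ)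
    (hA : A.IsHermitian) (hB : B.IsHermitian) (ξ : ℝ) :
    |((univ.filter fun j => hA.eigenvalues j ≤ ξ).card : ℝ) / N -
      ((univ.filter fun j => hB.eigenvalues j ≤ ξ).card : ℝ) / N| ≤
      ((A - B).rank : ℝ) / N := by
  have key1 := card_filter_le A B hA hB ξ
  have key2 := card_filter_le B A hB hA ξ
  rw [rank_sub_symm] at key2
  rw [div_sub_div_same, abs_div, abs_of_pos (by exact_mod_cast hN : (0:ℝ) < N)]
  gcongr
  rw [abs_sub_le_iff]
  have k1 : ((univ.filter fun j => hA.eigenvalues j ≤ ξ).card : ℝ) ≤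
      ((univ.filter fun j => hB.eigenvalues j ≤ ξ).card : ℝ) + ((A - B).rank : ℝ) := by
    exact_mod_cast key1
  have k2 : ((univ.filter fun j => hB.eigenvalues j ≤ ξ).card : ℝ) ≤
      ((univ.filter fun j => hA.eigenvalues j ≤ ξ).card : ℝ) + ((A - B).rank : ℝ) := by
    exact_mod_cast key2
  constructor <;> linarith


end
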